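/- Let A be a strongly connected synchronizing n-state automaton, p a positive probability vector on its alphabet, and α ∈ ℚ^n the steady-state distribution of S = Σ_a p(a)[a]. If L is the least common multiple of the denominators of the components of α, then the reset length satisfies 𝔠(A) ≤ 1 + (n−1)(L−2). -/

import Mathlib

open Matrix

/-- The 0-1 transition matrix of a letter: `(p,q)`-entry is 1 iff `δ q a = p`. -/
def letterMat {n k : ℕ} (δ : Fin n → Fin k → Fin n) (a : Fin k) :
    Matrix (Fin n) (Fin n) ℝ :=
  fun p q => if δ q a = p then 1 else 0

/-- The matrix of a word, satisfying `[u][K] = [K·u]`. -/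
def wordMat {n k : ℕ} (δ : Fin n → Fin k → Fin n) (w : List (Fin k)) :
    Matrix (Fin n) (Fin n) ℝ :=
  (w.reverse.map (letterMat δ)).prod

/-- The action of a word on a state. -/
def act {n k : ℕ} (δ : Fin n → Fin k → Fin n) (w : List (Fin k)) (q : Fin n) : Fin n :=
  w.foldl δ q

/-- A word is a reset word if it maps all states to one state. -/
def IsReset {n k : ℕ} (δ : Fin n → Fin k → Fin n) (w : List (Fin k)) : Prop :=
  ∀ p q : Fin n, act δ w p = act δ w q


namespace S8
variable {n k : ℕ} (δ : Fin n → Fin k → Fin n)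



lemma act_append (u v : List (Fin k)) (q : Fin n) :
    act δ (u ++ v) q = act δ v (act δ u q) := List.foldl_append

/-- preimage of a set under word action -/
def pre (u : List (Fin k)) (K : Finset (Fin n)) : Finset (Fin n) :=
  Finset.univ.filter (fun q => act δ u q ∈ K)

lemma mem_pre {u : List (Fin k)} {K : Finset (Fin n)} {q : Fin n} :
    q ∈ pre δ u K ↔ act δ u q ∈ K := by simp [pre]

lemma pre_pre (u v : List (Fin k)) (K : Finset (Fin n)) :
    pre δ v (pre δ u K) = pre δ (v ++ u) K := by
  ext q; simp [mem_pre, act_append]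

/-- word action on functions -/
def Tw (u : List (Fin k)) (y : Fin n → ℝ) : Fin n → ℝ := fun q => y (act δ u q)

lemma Tw_nil (y : Fin n → ℝ) : Tw δ [] y = y := rfl

lemma Tw_append (u v : List (Fin k)) (y : Fin n → ℝ) :
    Tw δ (u ++ v) y = Tw δ u (Tw δ v y) := by
  funext q; simp [Tw, act_append]

lemma Tw_cons (a : Fin k) (u : List (Fin k)) (y : Fin n → ℝ) :
    Tw δ (a :: u) y = fun q => (Tw δ u y) (δ q a) := by
  funext q; simp [Tw, act]

lemma Tw_add (u : List (Fin k)) (y z : Fin n → ℝ) :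
    Tw δ u (y + z) = Tw δ u y + Tw δ u z := rfl

lemma Tw_smul (u : List (Fin k)) (c : ℝ) (y : Fin n → ℝ) :
    Tw δ u (c • y) = c • Tw δ u y := rfl

variable (α : Fin n → ℝ) (p : Fin k → ℝ)

/-- weighted functional -/
def g (y : Fin n → ℝ) : ℝ := ∑ i, α i * y i

lemma g_add (y z : Fin n → ℝ) : g α (y + z) = g α y + g α z := by
  simp [g, mul_add, Finset.sum_add_distrib]

lemma g_smul (c : ℝ) (y : Fin n → ℝ) : g α (c • y) = c * g α y := by
  simp only [g, Pi.smul_apply, smul_eq_mul, Finset.mul_sum]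
  exact Finset.sum_congr rfl (fun i _ => by ring)

/-- indicator -/
def chi (K : Finset (Fin n)) : Fin n → ℝ := fun i => if i ∈ K then 1 else 0

lemma g_Tw_chi (u : List (Fin k)) (K : Finset (Fin n)) :
    g α (Tw δ u (chi K)) = ∑ i ∈ pre δ u K, α i := by
  simp [g, Tw, chi, pre, Finset.sum_filter, mul_ite]



lemma avg (heig : ∀ j, ∑ i, (∑ a, p a * (if δ i a = j then (1:ℝ) else 0)) * α i = α j)
    (y : Fin n → ℝ) : ∑ a, p a * g α (fun q => y (δ q a)) = g α y := by
  have key : ∀ (f : Fin k → Fin n → Fin n → ℝ),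
      ∑ a, ∑ i, ∑ j, f a i j = ∑ j, ∑ i, ∑ a, f a i j := by
    intro f
    rw [Finset.sum_comm]
    refine Eq.trans (Finset.sum_congr rfl fun i _ => Finset.sum_comm) ?_
    exact Finset.sum_comm
  calc ∑ a, p a * g α (fun q => y (δ q a))
      = ∑ a, ∑ i, ∑ j, p a * (if δ i a = j then (1:ℝ) else 0) * α i * y j := by
        refine Finset.sum_congr rfl fun a _ => ?_
        rw [show g α (fun q => y (δ q a)) = ∑ i, α i * y (δ i a) from rfl, Finset.mul_sum]
        refine Finset.sum_congr rfl fun i _ => ?_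
        simp only [mul_ite, ite_mul, one_mul, zero_mul, mul_zero, mul_one,
          Finset.sum_ite_eq, Finset.mem_univ, if_true]
        ring
    _ = ∑ j, ∑ i, ∑ a, p a * (if δ i a = j then (1:ℝ) else 0) * α i * y j := key _
    _ = g α y := by
        rw [show g α y = ∑ j, α j * y j from rfl]
        refine Finset.sum_congr rfl fun j _ => ?_
        rw [← heig j, Finset.sum_mul]
        refine Finset.sum_congr rfl fun i _ => ?_
        rw [Finset.sum_mul, Finset.sum_mul]

/-- the subspace of vectors whose weight is preserved by all words of length ≤ m -/
def Zs (m : ℕ) : Submodule ℝ (Fin n → ℝ) where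
  carrier := {y | ∀ u : List (Fin k), u.length ≤ m → g α (Tw δ u y) = g α y}
  zero_mem' := by intro u _; simp [Tw, g]
  add_mem' := by intro y z hy hz u hu; rw [Tw_add, g_add, hy u hu, hz u hu, g_add]
  smul_mem' := by intro c y hy u hu; rw [Tw_smul, g_smul, hy u hu, g_smul]

lemma mem_Zs {m : ℕ} {y : Fin n → ℝ} :
    y ∈ Zs δ α m ↔ ∀ u : List (Fin k), u.length ≤ m → g α (Tw δ u y) = g α y := Iff.rfl

lemma Zs_antitone {m m' : ℕ} (h : m ≤ m') : Zs δ α m' ≤ Zs δ α m :=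
  fun y hy u hu => hy u (le_trans hu h)

lemma one_mem_Zs (m : ℕ) : (fun _ => (1:ℝ)) ∈ Zs δ α m := fun _ _ => rfl

lemma Zs_step {m : ℕ} {y : Fin n → ℝ} (hy : y ∈ Zs δ α (m+1)) (a : Fin k) :
    Tw δ [a] y ∈ Zs δ α m := by
  intro u hu
  rw [← Tw_append, hy (u ++ [a]) (by simp; omega), hy [a] (by simp)]

lemma Zs_succ_of_eq {m : ℕ} (h : Zs δ α (m+1) = Zs δ α m) :
    Zs δ α (m+2) = Zs δ α (m+1) := by
  refine le_antisymm (Zs_antitone δ α (by omega)) ?_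
  intro y hy u hu
  rcases Nat.lt_or_ge u.length (m+2) with h'|h'
  · exact hy u (by omega)
  · have hlen : u.length = m + 2 := le_antisymm hu h'
    have hne : u ≠ [] := by intro e; simp [e] at hlen
    obtain ⟨v, a, rfl⟩ : ∃ v a, u = v ++ [a] :=
      ⟨u.dropLast, u.getLast hne, (u.dropLast_append_getLast hne).symm⟩
    have hv : v.length = m + 1 := by
      have := hlen; simp [List.length_append] at this; omega
    have h2 : Tw δ [a] y ∈ Zs δ α (m+1) := by
      have := Zs_step δ α hy a
      rwa [← h] at this
    rw [Tw_append, h2 v (by omega), hy [a] (by simp)]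

lemma Zs_stab_forever {m : ℕ} (h : Zs δ α (m+1) = Zs δ α m) :
    ∀ j, Zs δ α (m + j) = Zs δ α m := by
  have hstep : ∀ j, Zs δ α (m + j + 1) = Zs δ α (m + j) := by
    intro j
    induction j with
    | zero => exact h
    | succ j ih => exact Zs_succ_of_eq δ α ih
  intro j
  induction j with
  | zero => rfl
  | succ j ih => rw [show m + (j+1) = m + j + 1 from rfl, hstep j, ih]

lemma Zs_ge (hn : 1 ≤ n) : ∀ m, Zs δ α (n-1) ≤ Zs δ α m := by
  have hstab : ∃ m0, m0 ≤ n - 1 ∧ Zs δ α (m0+1) = Zs δ α m0 := by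
    by_contra hc
    push_neg at hc
    have hlt : ∀ m, m ≤ n-1 → Zs δ α (m+1) < Zs δ α m := fun m hm =>
      lt_of_le_of_ne (Zs_antitone δ α (by omega)) (hc m hm)
    have hrank : ∀ m, m ≤ n → Module.finrank ℝ (Zs δ α m) + m ≤ n := by
      intro m
      induction m with
      | zero =>
        intro _
        have h1 : Module.finrank ℝ (Zs δ α (k := k) 0) ≤ Module.finrank ℝ (Fin n → ℝ) :=
          Submodule.finrank_le _
        rw [Module.finrank_fin_fun] at h1
        omega
      | succ m ih =>
        intro hm
        have h1 := Submodule.finrank_lt_finrank_of_lt (hlt m (by omega))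
        have h2 := ih (by omega)
        omega
    have h0 : Module.finrank ℝ (Zs δ α (k := k) n) = 0 := by
      have := hrank n le_rfl; omega
    have hbot : Zs δ α (k := k) n = ⊥ := Submodule.finrank_eq_zero.mp h0
    have h1 : (fun _ => (1:ℝ)) ∈ Zs δ α (k := k) n := one_mem_Zs δ α n
    rw [hbot] at h1
    have : (fun _ => (1:ℝ)) = (0 : Fin n → ℝ) := h1
    have : (1:ℝ) = 0 := congrFun this ⟨0, by omega⟩
    norm_num at this
  obtain ⟨m0, hm0, hstab⟩ := hstab
  intro m
  rcases le_or_gt m (n-1) with h|h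
  · exact Zs_antitone δ α h
  · have h1 : Zs δ α (k := k) m = Zs δ α m0 := by
      have := Zs_stab_forever δ α hstab (m - m0)
      rwa [show m0 + (m - m0) = m by omega] at this
    rw [h1]
    exact Zs_antitone δ α hm0



lemma eq_of_avg (hp : ∀ a, 0 < p a) (hp1 : ∑ a, p a = 1) {c : Fin k → ℝ} {w : ℝ}
    (hle : ∀ a, c a ≤ w) (havg : ∑ a, p a * c a = w) : ∀ a, c a = w := by
  have hz : ∑ a, p a * (w - c a) = 0 := by
    rw [Finset.sum_congr rfl (fun a _ => mul_sub (p a) w (c a)),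
      Finset.sum_sub_distrib, ← Finset.sum_mul, hp1, havg]
    ring
  have hnn : ∀ a ∈ Finset.univ, 0 ≤ p a * (w - c a) := fun a _ =>
    mul_nonneg (hp a).le (by linarith [hle a])
  intro a
  have := (Finset.sum_eq_zero_iff_of_nonneg hnn).mp hz a (Finset.mem_univ a)
  rcases mul_eq_zero.mp this with h|h
  · exact absurd h (hp a).ne'
  · linarith

lemma short_eq (hp : ∀ a, 0 < p a) (hp1 : ∑ a, p a = 1)
    (heig : ∀ j, ∑ i, (∑ a, p a * (if δ i a = j then (1:ℝ) else 0)) * α i = α j)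
    (y : Fin n → ℝ) (N : ℕ)
    (Hle : ∀ u : List (Fin k), u.length ≤ N → g α (Tw δ u y) ≤ g α y) :
    ∀ u : List (Fin k), u.length ≤ N → g α (Tw δ u y) = g α y := by
  have main : ∀ m, m ≤ N → ∀ u : List (Fin k), u.length = m → g α (Tw δ u y) = g α y := by
    intro m
    induction m with
    | zero =>
      intro _ u hu
      rw [List.length_eq_zero_iff.mp hu, Tw_nil]
    | succ m ih =>
      intro hm u hu
      obtain ⟨a, v, rfl⟩ : ∃ a v, u = a :: v := by
        cases u with
        | nil => simp at hu
        | cons a v => exact ⟨a, v, rfl⟩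
      have hv : v.length = m := by simpa using hu
      have havg : ∑ b, p b * g α (Tw δ (b :: v) y) = g α y := by
        have h1 := avg δ α p heig (Tw δ v y)
        have h2 : ∀ b, (fun q => (Tw δ v y) (δ q b)) = Tw δ (b :: v) y := by
          intro b; rw [Tw_cons]
        rw [Finset.sum_congr rfl (fun b _ => by rw [h2 b])] at h1
        rw [h1, ih (by omega) v hv]
      have hle : ∀ b, g α (Tw δ (b :: v) y) ≤ g α y := fun b =>
        Hle (b :: v) (by simp [hv]; omega)
      exact eq_of_avg p hp hp1 hle havg a
  intro u hu
  exact main u.length hu u rfl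

lemma exists_pre_univ (hn : 2 ≤ n)
    (hsc : ∀ s q : Fin n, ∃ w : List (Fin k), act δ w s = q)
    (hsync : ∃ w : List (Fin k), ∀ p q : Fin n, act δ w p = act δ w q)
    {K : Finset (Fin n)} (hK : K.Nonempty) :
    ∃ u : List (Fin k), pre δ u K = Finset.univ := by
  obtain ⟨w0, hw0⟩ := hsync
  obtain ⟨s0, hs0⟩ := hK
  set t0 := act δ w0 ⟨0, by omega⟩ with ht0
  obtain ⟨v, hv⟩ := hsc t0 s0
  refine ⟨w0 ++ v, ?_⟩
  apply Finset.eq_univ_of_forall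
  intro q
  rw [mem_pre, act_append, hw0 q ⟨0, by omega⟩, ← ht0, hv]
  exact hs0

/-- the extension lemma -/
lemma extension (hn : 2 ≤ n) (hp : ∀ a, 0 < p a) (hp1 : ∑ a, p a = 1)
    (hαpos : ∀ i, 0 < α i)
    (heig : ∀ j, ∑ i, (∑ a, p a * (if δ i a = j then (1:ℝ) else 0)) * α i = α j)
    (hsc : ∀ s q : Fin n, ∃ w : List (Fin k), act δ w s = q)
    (hsync : ∃ w : List (Fin k), ∀ p q : Fin n, act δ w p = act δ w q)
    {K : Finset (Fin n)} (hK : K.Nonempty) (hKne : K ≠ Finset.univ) :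
    ∃ u : List (Fin k), u.length ≤ n - 1 ∧
      (∑ i ∈ K, α i) < ∑ i ∈ pre δ u K, α i := by
  by_contra hc
  push_neg at hc
  have Hle : ∀ u : List (Fin k), u.length ≤ n - 1 →
      g α (Tw δ u (chi K)) ≤ g α (chi K) := by
    intro u hu
    rw [g_Tw_chi]
    have h0 : g α (chi K) = ∑ i ∈ K, α i := by
      have := g_Tw_chi δ α [] K
      rwa [Tw_nil, show pre δ [] K = K by ext q; simp [mem_pre, act]] at this
    rw [h0]
    exact hc u hu
  have heq := short_eq δ α p hp hp1 heig (chi K) (n-1) Hle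
  have hmem : chi K ∈ Zs δ α (n-1) := heq
  have hall : ∀ u : List (Fin k), g α (Tw δ u (chi K)) = g α (chi K) := by
    intro u
    exact Zs_ge δ α (by omega) u.length hmem u le_rfl
  obtain ⟨u0, hu0⟩ := exists_pre_univ δ hn hsc hsync hK
  have h1 : g α (Tw δ u0 (chi K)) = ∑ i, α i := by
    rw [g_Tw_chi, hu0]
  have h2 : g α (chi K) = ∑ i ∈ K, α i := by
    have := g_Tw_chi δ α [] K
    rwa [Tw_nil, show pre δ [] K = K by ext q; simp [mem_pre, act]] at this
  obtain ⟨i0, hi0⟩ : ∃ i, i ∉ K := by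
    by_contra h; push_neg at h; exact hKne (Finset.eq_univ_of_forall h)
  have hlt : ∑ i ∈ K, α i < ∑ i, α i :=
    Finset.sum_lt_sum_of_subset (Finset.subset_univ K) (Finset.mem_univ i0) hi0 (hαpos i0)
      (fun j _ _ => (hαpos j).le)
  rw [hall u0, h2] at h1
  linarith


lemma exists_noninj (hn : 2 ≤ n)
    (hsync : ∃ w : List (Fin k), ∀ p q : Fin n, act δ w p = act δ w q) :
    ∃ (a : Fin k) (q1 q2 : Fin n), q1 ≠ q2 ∧ δ q1 a = δ q2 a := by
  by_contra hc
  push_neg at hc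
  have hinj : ∀ w : List (Fin k), Function.Injective (act δ w) := by
    intro w
    induction w with
    | nil => exact fun x y h => h
    | cons a v ih =>
      intro x y h
      have h' : act δ v (δ x a) = act δ v (δ y a) := h
      have h2 := ih h'
      by_contra hxy
      exact hc a x y hxy h2
  obtain ⟨w, hw⟩ := hsync
  have h01 := hinj w (hw ⟨0, by omega⟩ ⟨1, by omega⟩)
  simp [Fin.ext_iff] at h01

def Wq (αq : Fin n → ℚ) (K : Finset (Fin n)) : ℚ := ∑ i ∈ K, αq i

end S8

open S8

/-- If the steady-state distribution `α` of `S = Σ_a p(a)[a]` has rational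
entries and `L` is the lcm of their denominators, then the reset length is at
most `1 + (n-1)(L-2)`. -/
theorem stmt8 {n k : ℕ} (hn : 2 ≤ n) (δ : Fin n → Fin k → Fin n)
    (hsc : ∀ s q : Fin n, ∃ w : List (Fin k), act δ w s = q)
    (hsync : ∃ w, IsReset δ w)
    (p : Fin k → ℝ) (hp : ∀ a, 0 < p a) (hp1 : ∑ a, p a = 1)
    (α : Fin n → ℝ) (hαpos : ∀ i, 0 < α i) (hα1 : ∑ i, α i = 1)
    (hαeig : (∑ a, p a • letterMat δ a).mulVec α = α)
    (αq : Fin n → ℚ) (hrat : ∀ i, α i = (αq i : ℝ))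
    (L : ℕ) (hL : L = Finset.univ.lcm (fun i : Fin n => (αq i).den))
    (r : ℕ)
    (hr : IsLeast {t : ℕ | ∃ w : List (Fin k), IsReset δ w ∧ w.length = t} r) :
    r ≤ 1 + (n - 1) * (L - 2) := by
  classical
  have hsync' : ∃ w : List (Fin k), ∀ p q : Fin n, act δ w p = act δ w q := hsync
  have heig : ∀ j, ∑ i, (∑ a, p a * (if δ i a = j then (1:ℝ) else 0)) * α i = α j := by
    intro j
    have h := congrFun hαeig j
    simp only [Matrix.mulVec, dotProduct, Matrix.sum_apply, Matrix.smul_apply,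
      letterMat, smul_eq_mul] at h
    exact h
  have hLd : ∀ i, (αq i).den ∣ L := fun i => hL ▸ Finset.dvd_lcm (Finset.mem_univ i)
  have hL0 : 0 < L := by
    rcases Nat.eq_zero_or_pos L with h|h
    · exfalso
      rw [hL, Finset.lcm_eq_zero_iff] at h
      obtain ⟨i, -, hi⟩ := h
      have h2 : (αq i).den = 0 := hi
      have h3 := (αq i).den_pos
      omega
    · exact h
  have hαqpos : ∀ i, (0:ℚ) < αq i := by
    intro i
    have h := hαpos i
    rw [hrat i] at h
    exact_mod_cast h
  have hαq1 : ∑ i, αq i = 1 := by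
    have h : ((∑ i, αq i : ℚ) : ℝ) = 1 := by
      push_cast
      rw [← hα1]
      exact Finset.sum_congr rfl (fun i _ => (hrat i).symm)
    exact_mod_cast h
  have hzi : ∀ i : Fin n, ∃ z : ℤ, (z:ℚ) = (L:ℚ) * αq i ∧ 1 ≤ z := by
    intro i
    obtain ⟨c, hc⟩ := hLd i
    have hne : ((αq i).den : ℚ) ≠ 0 := Nat.cast_ne_zero.mpr (αq i).den_pos.ne'
    have hden : ((αq i).den : ℚ) * αq i = (αq i).num := by
      calc ((αq i).den : ℚ) * αq i
          = ((αq i).den:ℚ) * (((αq i).num : ℚ) / ((αq i).den : ℚ)) := by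
            rw [Rat.num_div_den]
        _ = (αq i).num := by field_simp
    have hval : (((c:ℤ) * (αq i).num : ℤ) : ℚ) = (L:ℚ) * αq i := by
      have hLc : (L:ℚ) = ((αq i).den : ℚ) * (c:ℚ) := by exact_mod_cast congrArg (Nat.cast : ℕ → ℚ) hc
      push_cast
      calc ((c:ℚ) * (αq i).num) = (c:ℚ) * (((αq i).den:ℚ) * αq i) := by rw [hden]
        _ = (((αq i).den : ℚ) * (c:ℚ)) * αq i := by ring
        _ = (L:ℚ) * αq i := by rw [← hLc]
    refine ⟨(c:ℤ) * (αq i).num, hval, ?_⟩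
    have hl : (0:ℚ) < (L:ℚ) := by exact_mod_cast hL0
    have hpos : (0:ℚ) < (((c:ℤ) * (αq i).num : ℤ) : ℚ) := by
      rw [hval]
      exact mul_pos hl (hαqpos i)
    have : (0:ℤ) < (c:ℤ) * (αq i).num := by exact_mod_cast hpos
    omega
  have hzK : ∀ K : Finset (Fin n), ∃ z : ℤ, (z:ℚ) = (L:ℚ) * Wq αq K := by
    intro K
    choose z hz h1 using hzi
    refine ⟨∑ i ∈ K, z i, ?_⟩
    rw [Wq, Finset.mul_sum]
    push_cast
    exact Finset.sum_congr rfl fun i _ => hz i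
  have hbridge : ∀ K : Finset (Fin n), (∑ i ∈ K, α i) = ((Wq αq K : ℚ) : ℝ) := by
    intro K
    rw [Wq]
    push_cast
    exact Finset.sum_congr rfl fun i _ => hrat i
  have hn1 : (n:ℚ) ≤ (L:ℚ) := by
    choose z hz h1 using hzi
    calc (n:ℚ) = ∑ _i : Fin n, (1:ℚ) := by simp
      _ ≤ ∑ i : Fin n, ((z i : ℚ)) := Finset.sum_le_sum (fun i _ => by exact_mod_cast h1 i)
      _ = ∑ i : Fin n, (L:ℚ) * αq i := Finset.sum_congr rfl fun i _ => hz i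
      _ = (L:ℚ) * ∑ i, αq i := (Finset.mul_sum _ _ _).symm
      _ = (L:ℚ) := by rw [hαq1, mul_one]
  have hLn : n ≤ L := by exact_mod_cast hn1
  have ext' : ∀ K : Finset (Fin n), K.Nonempty → K ≠ Finset.univ →
      ∃ v : List (Fin k), v.length ≤ n - 1 ∧ Wq αq K < Wq αq (pre δ v K) := by
    intro K h1 h2
    obtain ⟨v, hv1, hv2⟩ := extension δ α p hn hp hp1 hαpos heig hsc hsync' h1 h2
    refine ⟨v, hv1, ?_⟩
    rw [hbridge K, hbridge (pre δ v K)] at hv2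
    exact_mod_cast hv2
  have incr : ∀ K K' : Finset (Fin n), Wq αq K < Wq αq K' →
      (L:ℚ) * Wq αq K + 1 ≤ (L:ℚ) * Wq αq K' := by
    intro K K' h
    obtain ⟨z, hz⟩ := hzK K
    obtain ⟨z', hz'⟩ := hzK K'
    have hlt : z < z' := by
      have h2 : (z:ℚ) < (z':ℚ) := by
        rw [hz, hz']
        have hl : (0:ℚ) < (L:ℚ) := by exact_mod_cast hL0
        exact mul_lt_mul_of_pos_left h hl
      exact_mod_cast h2
    rw [← hz, ← hz']
    exact_mod_cast hlt
  obtain ⟨a0, q1, q2, hq12, hδeq⟩ := exists_noninj δ hn hsync'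
  set s : Fin n := δ q1 a0 with hs
  have hq1m : q1 ∈ pre δ [a0] ({s} : Finset (Fin n)) := by
    rw [mem_pre]
    simp [act, hs]
  have hq2m : q2 ∈ pre δ [a0] ({s} : Finset (Fin n)) := by
    rw [mem_pre]
    simp only [act, List.foldl_cons, List.foldl_nil, Finset.mem_singleton]
    rw [← hδeq]
  have hbase : (2:ℚ) ≤ (L:ℚ) * Wq αq (pre δ [a0] {s}) := by
    choose z hz h1 using hzi
    have hsub : ({q1, q2} : Finset (Fin n)) ⊆ pre δ [a0] {s} := by
      intro x hx
      rcases Finset.mem_insert.mp hx with rfl|hx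
      · exact hq1m
      · rw [Finset.mem_singleton] at hx
        subst hx
        exact hq2m
    have h2 : αq q1 + αq q2 ≤ Wq αq (pre δ [a0] {s}) := by
      rw [← Finset.sum_pair hq12]
      exact Finset.sum_le_sum_of_subset_of_nonneg hsub (fun i _ _ => (hαqpos i).le)
    have h3 : (1:ℚ) ≤ (L:ℚ) * αq q1 := by rw [← hz q1]; exact_mod_cast h1 q1
    have h4 : (1:ℚ) ≤ (L:ℚ) * αq q2 := by rw [← hz q2]; exact_mod_cast h1 q2
    have hl : (0:ℚ) ≤ (L:ℚ) := by positivity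
    nlinarith [mul_le_mul_of_nonneg_left h2 hl]
  have main : ∀ j : ℕ, ∃ u : List (Fin k), u.length ≤ 1 + (n-1)*j ∧
      (pre δ u ({s} : Finset (Fin n)) = Finset.univ ∨
        (2 + j : ℚ) ≤ (L:ℚ) * Wq αq (pre δ u {s})) := by
    intro j
    induction j with
    | zero =>
      refine ⟨[a0], by simp, Or.inr ?_⟩
      push_cast
      simpa using hbase
    | succ j ih =>
      obtain ⟨u, hu1, hu2⟩ := ih
      have hms : (n-1)*(j+1) = (n-1)*j + (n-1) := by ring
      have hlen : u.length ≤ 1 + (n-1)*(j+1) := by omega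
      rcases hu2 with h|h
      · exact ⟨u, hlen, Or.inl h⟩
      by_cases hKu : pre δ u ({s}:Finset (Fin n)) = Finset.univ
      · exact ⟨u, hlen, Or.inl hKu⟩
      have hKne : (pre δ u ({s}:Finset (Fin n))).Nonempty := by
        rw [Finset.nonempty_iff_ne_empty]
        intro he
        rw [he] at h
        have hj : (0:ℚ) ≤ (j:ℚ) := by positivity
        simp [Wq] at h
        linarith
      obtain ⟨v, hv1, hv2⟩ := ext' _ hKne hKu
      refine ⟨v ++ u, ?_, Or.inr ?_⟩
      · rw [List.length_append]
        omega
      · have h2 := incr _ _ hv2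
        rw [pre_pre] at h2
        have h3 : (2 + j : ℚ) + 1 ≤ (L:ℚ) * Wq αq (pre δ (v ++ u) {s}) := by linarith
        push_cast
        linarith
  obtain ⟨u, hu1, hu2⟩ := main (L - 2)
  have hLge2 : 2 ≤ L := le_trans hn hLn
  have huniv : pre δ u ({s}:Finset (Fin n)) = Finset.univ := by
    rcases hu2 with h|h
    · exact h
    by_contra hne
    obtain ⟨i0, hi0⟩ : ∃ i, i ∉ pre δ u ({s}:Finset (Fin n)) := by
      by_contra hh
      push_neg at hh
      exact hne (Finset.eq_univ_of_forall hh)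
    have hlt : Wq αq (pre δ u {s}) < 1 := by
      rw [← hαq1, Wq]
      exact Finset.sum_lt_sum_of_subset (Finset.subset_univ _) (Finset.mem_univ i0) hi0
        (hαqpos i0) (fun j _ _ => (hαqpos j).le)
    have hcast : ((L - 2 : ℕ) : ℚ) = (L:ℚ) - 2 := by
      rw [Nat.cast_sub hLge2]
      norm_num
    rw [hcast] at h
    have hL0' : (0:ℚ) < (L:ℚ) := by exact_mod_cast hL0
    nlinarith
  have hreset : IsReset δ u := by
    intro x y
    have hx : x ∈ pre δ u ({s}:Finset (Fin n)) := by rw [huniv]; exact Finset.mem_univ x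
    have hy : y ∈ pre δ u ({s}:Finset (Fin n)) := by rw [huniv]; exact Finset.mem_univ y
    rw [mem_pre, Finset.mem_singleton] at hx hy
    rw [hx, hy]
  exact le_trans (hr.2 ⟨u, hreset, rfl⟩) hu1
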